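/- The complete graph K_{k+1} contains no cycle of length congruent to 2 modulo k, but for every r with 2 ≤ r ≤ k and every residue t mod r with (r,t) ≠ (k,2), K_{k+1} contains a cycle of length congruent to t modulo r. -/

import Mathlib

open SimpleGraph

def descWalk (m : ℕ) : ∀ n, (h : n < m) →
    (completeGraph (Fin m)).Walk ⟨n, h⟩ ⟨0, Nat.lt_of_le_of_lt (Nat.zero_le n) h⟩
  | 0, _ => SimpleGraph.Walk.nil
  | n+1, h => SimpleGraph.Walk.cons
      (by simp [completeGraph, Fin.ext_iff])
      (descWalk m n (by omega))

lemma descWalk_length (m n : ℕ) (h : n < m) : (descWalk m n h).length = n := by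
  induction n with
  | zero => rfl
  | succ n ih => simp [descWalk, ih]

lemma descWalk_support_le (m n : ℕ) (h : n < m) :
    ∀ v ∈ (descWalk m n h).support, v.1 ≤ n := by
  induction n with
  | zero => simp [descWalk]
  | succ n ih =>
    intro v hv
    simp only [descWalk, SimpleGraph.Walk.support_cons, List.mem_cons] at hv
    rcases hv with rfl | hv
    · simp
    · exact le_trans (ih (by omega) v hv) (by omega)

lemma descWalk_support_nodup (m n : ℕ) (h : n < m) :
    (descWalk m n h).support.Nodup := by
  induction n with
  | zero => simp [descWalk]
  | succ n ih =>
    simp only [descWalk, SimpleGraph.Walk.support_cons, List.nodup_cons]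
    refine ⟨fun hm => ?_, ih (by omega)⟩
    have := descWalk_support_le m n (by omega) _ hm
    simp at this

lemma descWalk_edges (m n : ℕ) (h : n < m) :
    ∀ e ∈ (descWalk m n h).edges, ∃ i, i + 1 ≤ n ∧ ∃ (h1 : i + 1 < m) (h2 : i < m),
      e = s((⟨i+1, h1⟩ : Fin m), (⟨i, h2⟩ : Fin m)) := by
  induction n with
  | zero => simp [descWalk]
  | succ n ih =>
    intro e he
    simp only [descWalk, SimpleGraph.Walk.edges_cons, List.mem_cons] at he
    rcases he with rfl | he
    · exact ⟨n, le_refl _, h, by omega, rfl⟩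
    · obtain ⟨i, hi, h1, h2, rfl⟩ := ih (by omega) e he
      exact ⟨i, by omega, h1, h2, rfl⟩

lemma exists_cycle_len (m L : ℕ) (h3 : 3 ≤ L) (hL : L ≤ m) :
    ∃ (v : Fin m) (w : (completeGraph (Fin m)).Walk v v),
      w.IsCycle ∧ w.length = L := by
  have h0 : 0 < m := by omega
  have hL1 : L - 1 < m := by omega
  have hadj : (completeGraph (Fin m)).Adj ⟨0, h0⟩ ⟨L-1, hL1⟩ := by
    simp [completeGraph, Fin.ext_iff]; omega
  refine ⟨⟨0, h0⟩, SimpleGraph.Walk.cons hadj (descWalk m (L-1) hL1), ?_, ?_⟩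
  · rw [SimpleGraph.Walk.cons_isCycle_iff]
    refine ⟨SimpleGraph.Walk.IsPath.mk' (descWalk_support_nodup m _ _), fun he => ?_⟩
    obtain ⟨i, hi, h1, h2, h⟩ := descWalk_edges m (L-1) hL1 _ he
    rw [Sym2.eq_iff] at h
    simp [Fin.ext_iff] at h
    omega
  · simp [descWalk_length]; omega

theorem stmt13 (k : ℕ) (hk : 3 ≤ k) :
    (∀ (v : Fin (k + 1)) (w : (completeGraph (Fin (k + 1))).Walk v v),
        w.IsCycle → w.length % k ≠ 2) ∧
    ∀ r, 2 ≤ r → r ≤ k → ∀ t < r, ¬(r = k ∧ t = 2) →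
      ∃ (v : Fin (k + 1)) (w : (completeGraph (Fin (k + 1))).Walk v v),
        w.IsCycle ∧ w.length % r = t := by
  constructor
  · intro v w hw hmod
    have h3 : 3 ≤ w.length := hw.three_le_length
    have hle : w.length ≤ k + 1 := by
      have hnd : w.support.tail.Nodup := hw.2
      have hcard : w.support.tail.length ≤ k + 1 := by
        simpa using hnd.length_le_card
      have h1 : w.support.length = w.length + 1 := w.length_support
      have h2 : w.support.tail.length = w.support.length - 1 := List.length_tail
      omega
    have hdm := Nat.div_add_mod w.length k
    rcases Nat.eq_zero_or_pos (w.length / k) with hq | hq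
    · rw [hq, Nat.mul_zero] at hdm; omega
    · have hk2 : k ≤ k * (w.length / k) := Nat.le_mul_of_pos_right k hq
      omega
  · intro r hr2 hrk t ht hnot
    have : ∃ L, 3 ≤ L ∧ L ≤ k + 1 ∧ L % r = t := by
      rcases Nat.lt_or_ge t 3 with h3 | h3
      · interval_cases t
        · -- t = 0
          rcases Nat.lt_or_ge r 3 with hr | hr
          · exact ⟨4, by omega, by omega, by interval_cases r <;> rfl⟩
          · exact ⟨r, hr, by omega, by simp⟩
        · -- t = 1
          exact ⟨r + 1, by omega, by omega, by
            rw [Nat.add_mod_left]; exact Nat.one_mod_eq_one.mpr (by omega)⟩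
        · -- t = 2
          have hrk' : r < k := lt_of_le_of_ne hrk (fun h => hnot ⟨h, rfl⟩)
          exact ⟨r + 2, by omega, by omega, by
            rw [Nat.add_mod_left]; exact Nat.mod_eq_of_lt (by omega)⟩
      · exact ⟨t, h3, by omega, Nat.mod_eq_of_lt ht⟩
    obtain ⟨L, h3, hle, hmod⟩ := this
    obtain ⟨v, w, hc, hlen⟩ := exists_cycle_len (k+1) L h3 hle
    exact ⟨v, w, hc, by rw [hlen, hmod]⟩
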